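/- Let M ∈ ℂ^{r×r} be Hermitian positive semidefinite and let P ∈ ℂ^{r×r} be an orthogonal projection, i.e. Pᴴ = P and P² = P. Then det(I_r + P·M·P) ≤ det(I_r + M), where both determinants are positive real numbers. -/

import Mathlib

open Matrix ComplexOrder
open scoped MatrixOrder

private lemma aux_eig_ge_one {n : Type*} [Fintype n] [DecidableEq n] {S : Matrix n n ℂ}
    (hS : S.PosSemidef) (h1 : (1 + S).IsHermitian) (i : n) :
    1 ≤ h1.eigenvalues i := by
  have hv := h1.eigenvalues_eq i
  set v : n → ℂ := ⇑(h1.eigenvectorBasis i) with hvdef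
  have hnorm : RCLike.re (dotProduct (star v) v) = 1 := by
    have h := h1.eigenvectorBasis.orthonormal.1 i
    have h2 : dotProduct (star v) v = ((‖h1.eigenvectorBasis i‖ : ℝ) : ℂ) ^ 2 := by
      rw [dotProduct_comm, hvdef, ← EuclideanSpace.inner_eq_star_dotProduct]
      exact inner_self_eq_norm_sq_to_K (𝕜 := ℂ) (x := h1.eigenvectorBasis i)
    rw [h2, h]
    norm_num
  have hexp : (1 + S) *ᵥ v = v + S *ᵥ v := by
    rw [Matrix.add_mulVec, Matrix.one_mulVec]
  rw [hexp, dotProduct_add, map_add, hnorm] at hv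
  have := hS.re_dotProduct_nonneg v
  linarith

private lemma aux_one_le_det {n : Type*} [Fintype n] [DecidableEq n] {S : Matrix n n ℂ}
    (hS : S.PosSemidef) : (1 : ℂ) ≤ (1 + S).det := by
  have h1 : (1 + S).IsHermitian := Matrix.isHermitian_one.add hS.1
  rw [h1.det_eq_prod_eigenvalues]
  calc (1 : ℂ) = ∏ _i : n, (1 : ℂ) := by simp
    _ ≤ ∏ i, (h1.eigenvalues i : ℂ) := by
        apply Finset.prod_le_prod
        · intro i _; exact zero_le_one
        · intro i _
          have := aux_eig_ge_one hS h1 i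
          exact_mod_cast this

private lemma aux_det_mono {n : Type*} [Fintype n] [DecidableEq n] {X N : Matrix n n ℂ}
    (hX : X.PosDef) (hN : N.PosSemidef) : X.det ≤ (X + N).det := by
  set R := CFC.sqrt X with hRdef
  have hRR : R * R = X := CFC.sqrt_mul_sqrt_self X hX.posSemidef.nonneg
  have hRH : Rᴴ = R := (CFC.sqrt_nonneg X).isSelfAdjoint
  have hdetX : (0 : ℂ) < X.det := hX.det_pos
  have hdetR : R.det * R.det = X.det := by rw [← Matrix.det_mul, hRR]
  have hu : IsUnit R.det := by
    apply isUnit_of_mul_isUnit_left (y := R.det)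
    rw [hdetR]
    exact IsUnit.mk0 _ hdetX.ne'
  have hKps : (R⁻¹ * N * R⁻¹).PosSemidef := by
    have h := hN.conjTranspose_mul_mul_same R⁻¹
    rwa [Matrix.conjTranspose_nonsing_inv, hRH] at h
  have hfact : R * (1 + R⁻¹ * N * R⁻¹) * R = X + N := by
    rw [Matrix.mul_add, Matrix.mul_one, Matrix.add_mul, hRR]
    congr 1
    rw [← Matrix.mul_assoc, ← Matrix.mul_assoc, Matrix.mul_nonsing_inv _ hu,
      Matrix.one_mul, Matrix.mul_assoc, Matrix.nonsing_inv_mul _ hu, Matrix.mul_one]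
  have hdet : (X + N).det = X.det * (1 + R⁻¹ * N * R⁻¹).det := by
    rw [← hfact, Matrix.det_mul, Matrix.det_mul, ← hdetR]
    ring
  rw [hdet]
  calc X.det = X.det * 1 := (mul_one _).symm
    _ ≤ X.det * (1 + R⁻¹ * N * R⁻¹).det :=
        mul_le_mul_of_nonneg_left (aux_one_le_det hKps) hdetX.le

/-- Let `M ∈ ℂ^{r×r}` be Hermitian positive semidefinite and let `P ∈ ℂ^{r×r}`
be an orthogonal projection (`Pᴴ = P`, `P² = P`). Then `det(I + P M P) ≤ det(I + M)`,
both determinants being positive real numbers. -/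
theorem stmt_9 {r : ℕ}
    (M : Matrix (Fin r) (Fin r) ℂ) (hM : M.PosSemidef)
    (P : Matrix (Fin r) (Fin r) ℂ) (hP : Pᴴ = P) (hP2 : P * P = P) :
    ((1 + P * M * P).det).im = 0 ∧ 0 < ((1 + P * M * P).det).re ∧
    ((1 + M).det).im = 0 ∧ 0 < ((1 + M).det).re ∧
    ((1 + P * M * P).det).re ≤ ((1 + M).det).re := by
  set B := CFC.sqrt M with hBdef
  have hBB : B * B = M := CFC.sqrt_mul_sqrt_self M hM.nonneg
  have hBH : Bᴴ = B := (CFC.sqrt_nonneg M).isSelfAdjoint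
  -- P * M * P is PSD
  have hPMP : (P * M * P).PosSemidef := by
    have h := hM.conjTranspose_mul_mul_same P
    rwa [hP] at h
  have hD1 : (1 + P * M * P).PosDef := Matrix.PosDef.one.add_posSemidef hPMP
  have hD2 : (1 + M).PosDef := Matrix.PosDef.one.add_posSemidef hM
  have h1 := hD1.det_pos
  have h2 := hD2.det_pos
  rw [Complex.lt_def] at h1 h2
  simp only [Complex.zero_re, Complex.zero_im] at h1 h2
  -- auxiliary PSD facts
  have hBPB : (B * P * B).PosSemidef := by
    have h := Matrix.posSemidef_conjTranspose_mul_self (P * B)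
    have he : (P * B)ᴴ * (P * B) = B * P * B := by
      rw [Matrix.conjTranspose_mul, hP, hBH, Matrix.mul_assoc B P (P * B),
        ← Matrix.mul_assoc P P B, hP2, ← Matrix.mul_assoc]
    rwa [he] at h
  have hQH : (1 - P)ᴴ = 1 - P := by rw [Matrix.conjTranspose_sub, Matrix.conjTranspose_one, hP]
  have hQ2 : (1 - P) * (1 - P) = 1 - P := by
    simp only [Matrix.mul_sub, Matrix.sub_mul, Matrix.one_mul, Matrix.mul_one, hP2]
    abel
  have hN : (B * (1 - P) * B).PosSemidef := by
    have h := Matrix.posSemidef_conjTranspose_mul_self ((1 - P) * B)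
    have he : ((1 - P) * B)ᴴ * ((1 - P) * B) = B * (1 - P) * B := by
      rw [Matrix.conjTranspose_mul, hQH, hBH, Matrix.mul_assoc B (1 - P) ((1 - P) * B),
        ← Matrix.mul_assoc (1 - P) (1 - P) B, hQ2, ← Matrix.mul_assoc]
    rwa [he] at h
  have hXD : (1 + B * P * B).PosDef := Matrix.PosDef.one.add_posSemidef hBPB
  -- det equality: det (1 + P M P) = det (1 + B P B)
  have hdeq : (1 + P * M * P).det = (1 + B * P * B).det := by
    have h1' : P * M * P = (P * B) * (B * P) := by
      rw [← hBB]; simp only [Matrix.mul_assoc]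
    have h2' : (B * P) * (P * B) = B * P * B := by
      rw [Matrix.mul_assoc B P (P * B), ← Matrix.mul_assoc P P B, hP2, ← Matrix.mul_assoc]
    rw [h1', Matrix.det_one_add_mul_comm, h2']
  -- sum decomposition
  have hsum : (1 + B * P * B) + B * (1 - P) * B = 1 + M := by
    have : B * (1 - P) * B = B * B - B * P * B := by
      rw [Matrix.mul_sub, Matrix.mul_one, Matrix.sub_mul]
    rw [this, hBB]
    abel
  have hmono := aux_det_mono hXD hN
  rw [hsum] at hmono
  rw [← hdeq] at hmono
  rw [Complex.le_def] at hmono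
  exact ⟨h1.2.symm, h1.1, h2.2.symm, h2.1, hmono.1⟩
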